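/- Let n ≥ 1 and let u : ℝⁿ → ℂ be a Schwartz function. Then Σ_{i,j=1}^{n} ‖∂_i ∂_j u‖²_{L²(ℝⁿ)} = ‖Δu‖²_{L²(ℝⁿ)}, where Δ = Σ_i ∂_i² is the Laplacian. In particular ‖∂_i ∂_j u‖_{L²(ℝⁿ)} ≤ ‖Δu‖_{L²(ℝⁿ)} for every pair (i,j). -/

import Mathlib

open MeasureTheory SchwartzMap RealInnerProductSpace

namespace MT10

variable {n : ℕ}

local notation "E" => EuclideanSpace ℝ (Fin n)

/-- Partial derivative on Schwartz space as a continuous linear map. -/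
noncomputable def pderivCLM (𝕜 : Type*) {E' F : Type*} [RCLike 𝕜] [NormedAddCommGroup E']
    [NormedSpace ℝ E'] [NormedAddCommGroup F] [NormedSpace ℝ F] [NormedSpace 𝕜 F]
    [SMulCommClass ℝ 𝕜 F] (m : E') : 𝓢(E', F) →L[𝕜] 𝓢(E', F) :=
  SchwartzMap.evalCLM 𝕜 E' F m ∘L fderivCLM 𝕜 E' F

theorem pderivCLM_apply (𝕜 : Type*) {E' F : Type*} [RCLike 𝕜] [NormedAddCommGroup E']
    [NormedSpace ℝ E'] [NormedAddCommGroup F] [NormedSpace ℝ F] [NormedSpace 𝕜 F]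
    [SMulCommClass ℝ 𝕜 F] (m : E') (f : 𝓢(E', F)) (x : E') :
    pderivCLM 𝕜 m f x = fderiv ℝ f x m :=
  rfl

lemma coe_pderiv (f : SchwartzMap (EuclideanSpace ℝ (Fin n)) ℂ) (v : E) :
    ⇑(pderivCLM ℝ v f) = fun y => fderiv ℝ (⇑f) y v := by
  funext y; rw [pderivCLM_apply]

lemma integrable_inner (f g : SchwartzMap (EuclideanSpace ℝ (Fin n)) ℂ) :
    Integrable (fun x => ⟪f x, g x⟫) (volume : Measure E) := by
  apply Integrable.mono'
    ((f.integrable (μ := volume)).norm.const_mul (SchwartzMap.seminorm ℝ 0 0 g))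
  · exact (f.continuous.inner g.continuous).aestronglyMeasurable
  · filter_upwards with x
    calc ‖⟪f x, g x⟫‖ ≤ ‖f x‖ * ‖g x‖ := norm_inner_le_norm _ _
    _ ≤ SchwartzMap.seminorm ℝ 0 0 g * ‖f x‖ := by
        rw [mul_comm]; gcongr; exact g.norm_le_seminorm ℝ x

lemma ibp (f g : SchwartzMap (EuclideanSpace ℝ (Fin n)) ℂ) (v : E) :
    ∫ x : E, ⟪f x, (pderivCLM ℝ v g) x⟫ = - ∫ x : E, ⟪(pderivCLM ℝ v f) x, g x⟫ := by
  have h1 : ∫ x : E, ⟪f x, fderiv ℝ (⇑g) x v⟫ = - ∫ x : E, ⟪fderiv ℝ (⇑f) x v, g x⟫ := by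
    apply integral_bilinear_fderiv_right_eq_neg_left_of_integrable
      (B := (innerSL ℝ : ℂ →L[ℝ] ℂ →L[ℝ] ℝ))
    · exact integrable_inner (pderivCLM ℝ v f) g
    · exact integrable_inner f (pderivCLM ℝ v g)
    · exact integrable_inner f g
    · exact fun x _ => f.differentiableAt
    · exact fun x _ => g.differentiableAt
  simp only [pderivCLM_apply]
  exact h1

lemma pderiv_comm (f : SchwartzMap (EuclideanSpace ℝ (Fin n)) ℂ) (v w : E) (x : E) :
    pderivCLM ℝ v (pderivCLM ℝ w f) x = pderivCLM ℝ w (pderivCLM ℝ v f) x := by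
  have hcoe : ⇑(fderivCLM ℝ E ℂ f) = fderiv ℝ ⇑f := by
    funext y; rw [fderivCLM_apply]
  have hdf : Differentiable ℝ (fderiv ℝ ⇑f) := by
    rw [← hcoe]; exact (fderivCLM ℝ E ℂ f).differentiable
  have key : ∀ a b : E,
      fderiv ℝ (fun y => fderiv ℝ (⇑f) y a) x b = fderiv ℝ (fderiv ℝ ⇑f) x b a := by
    intro a b
    rw [fderiv_clm_apply (hdf x) (differentiableAt_const a)]
    simp
  have symm := second_derivative_symmetric (f := ⇑f) (f' := fderiv ℝ ⇑f)
    (f'' := fderiv ℝ (fderiv ℝ ⇑f) x)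
    (fun y => (f.differentiable y).hasFDerivAt) ((hdf x).hasFDerivAt) v w
  simp only [pderivCLM_apply, coe_pderiv]
  rw [key w v, key v w, symm]

lemma pcomm (u : SchwartzMap (EuclideanSpace ℝ (Fin n)) ℂ) (v w : E) :
    pderivCLM ℝ v (pderivCLM ℝ w u) = pderivCLM ℝ w (pderivCLM ℝ v u) :=
  SchwartzMap.ext (pderiv_comm u v w)

/-- Miranda–Talenti key identity. -/
lemma key (u : SchwartzMap (EuclideanSpace ℝ (Fin n)) ℂ) (v w : E) :
    ∫ x : E, ⟪pderivCLM ℝ v (pderivCLM ℝ w u) x, pderivCLM ℝ v (pderivCLM ℝ w u) x⟫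
      = ∫ x : E, ⟪pderivCLM ℝ v (pderivCLM ℝ v u) x, pderivCLM ℝ w (pderivCLM ℝ w u) x⟫ := by
  calc ∫ x : E, ⟪pderivCLM ℝ v (pderivCLM ℝ w u) x, pderivCLM ℝ v (pderivCLM ℝ w u) x⟫
      = - ∫ x : E, ⟪pderivCLM ℝ v (pderivCLM ℝ v (pderivCLM ℝ w u)) x, pderivCLM ℝ w u x⟫ :=
        ibp _ _ v
    _ = - ∫ x : E, ⟪pderivCLM ℝ w u x, pderivCLM ℝ w (pderivCLM ℝ v (pderivCLM ℝ v u)) x⟫ := by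
        congr 1
        apply integral_congr_ae
        filter_upwards with x
        rw [real_inner_comm]
        have hc : pderivCLM ℝ v (pderivCLM ℝ v (pderivCLM ℝ w u))
            = pderivCLM ℝ w (pderivCLM ℝ v (pderivCLM ℝ v u)) := by
          rw [pcomm u v w, pcomm (pderivCLM ℝ v u) v w]
        rw [hc]
    _ = ∫ x : E, ⟪pderivCLM ℝ w (pderivCLM ℝ w u) x, pderivCLM ℝ v (pderivCLM ℝ v u) x⟫ := by
        rw [ibp _ _ w, neg_neg]
    _ = ∫ x : E, ⟪pderivCLM ℝ v (pderivCLM ℝ v u) x, pderivCLM ℝ w (pderivCLM ℝ w u) x⟫ := by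
        apply integral_congr_ae
        filter_upwards with x
        rw [real_inner_comm]

end MT10

open MeasureTheory MT10

theorem stmt_10 (n : ℕ) (hn : 1 ≤ n) (u : SchwartzMap (EuclideanSpace ℝ (Fin n)) ℂ) :
    (∑ i : Fin n, ∑ j : Fin n,
        ∫ x : EuclideanSpace ℝ (Fin n),
          ‖fderiv ℝ (fun y => fderiv ℝ (⇑u) y (EuclideanSpace.single j 1)) x
              (EuclideanSpace.single i 1)‖ ^ 2)
      = (∫ x : EuclideanSpace ℝ (Fin n),
          ‖∑ i : Fin n,
              fderiv ℝ (fun y => fderiv ℝ (⇑u) y (EuclideanSpace.single i 1)) x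
                (EuclideanSpace.single i 1)‖ ^ 2) ∧
    ∀ i j : Fin n,
      Real.sqrt (∫ x : EuclideanSpace ℝ (Fin n),
          ‖fderiv ℝ (fun y => fderiv ℝ (⇑u) y (EuclideanSpace.single j 1)) x
              (EuclideanSpace.single i 1)‖ ^ 2)
        ≤ Real.sqrt (∫ x : EuclideanSpace ℝ (Fin n),
            ‖∑ i : Fin n,
                fderiv ℝ (fun y => fderiv ℝ (⇑u) y (EuclideanSpace.single i 1)) x
                  (EuclideanSpace.single i 1)‖ ^ 2) := by
  classical
  set E := EuclideanSpace ℝ (Fin n)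
  set e : Fin n → E := fun i => EuclideanSpace.single i 1 with he
  set D : Fin n → Fin n → SchwartzMap E ℂ :=
    fun i j => pderivCLM ℝ (e i) (pderivCLM ℝ (e j) u) with hD
  have hrw : ∀ (i j : Fin n) (x : E),
      fderiv ℝ (fun y => fderiv ℝ (⇑u) y (e j)) x (e i) = (D i j) x := by
    intro i j x
    rw [← MT10.coe_pderiv u (e j)]
    exact (pderivCLM_apply ℝ (e i) (pderivCLM ℝ (e j) u) x).symm
  have hrw' : ∀ (i j : Fin n) (x : E),
      fderiv ℝ (fun y => fderiv ℝ (⇑u) y (EuclideanSpace.single j 1)) x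
        (EuclideanSpace.single i 1) = (D i j) x := hrw
  simp only [hrw']
  have hterm : ∀ i j : Fin n,
      (∫ x : E, ‖(D i j) x‖ ^ 2) = ∫ x : E, ⟪(D i j) x, (D i j) x⟫ := by
    intro i j
    apply integral_congr_ae
    filter_upwards with x
    rw [real_inner_self_eq_norm_sq]
  have hmain : (∑ i : Fin n, ∑ j : Fin n, ∫ x : E, ‖(D i j) x‖ ^ 2)
      = ∫ x : E, ‖∑ i : Fin n, (D i i) x‖ ^ 2 := by
    calc (∑ i : Fin n, ∑ j : Fin n, ∫ x : E, ‖(D i j) x‖ ^ 2)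
        = ∑ i : Fin n, ∑ j : Fin n, ∫ x : E, ⟪(D i i) x, (D j j) x⟫ := by
          refine Finset.sum_congr rfl fun i _ => Finset.sum_congr rfl fun j _ => ?_
          rw [hterm i j]
          exact MT10.key u (e i) (e j)
      _ = ∫ x : E, ∑ i : Fin n, ∑ j : Fin n, ⟪(D i i) x, (D j j) x⟫ := by
          rw [integral_finset_sum]
          · refine Finset.sum_congr rfl fun i _ => ?_
            rw [integral_finset_sum]
            intro j _
            exact MT10.integrable_inner (D i i) (D j j)
          · intro i _
            exact integrable_finset_sum _ fun j _ => MT10.integrable_inner (D i i) (D j j)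
      _ = ∫ x : E, ‖∑ i : Fin n, (D i i) x‖ ^ 2 := by
          apply integral_congr_ae
          filter_upwards with x
          rw [← real_inner_self_eq_norm_sq, sum_inner]
          exact Finset.sum_congr rfl fun i _ => (inner_sum _ _ _).symm
  refine ⟨hmain, fun i j => ?_⟩
  apply Real.sqrt_le_sqrt
  rw [← hmain]
  have hnn : ∀ i j : Fin n, 0 ≤ ∫ x : E, ‖(D i j) x‖ ^ 2 :=
    fun i j => integral_nonneg fun x => sq_nonneg _
  calc (∫ x : E, ‖(D i j) x‖ ^ 2)
      ≤ ∑ j : Fin n, ∫ x : E, ‖(D i j) x‖ ^ 2 :=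
        Finset.single_le_sum (fun k _ => hnn i k) (Finset.mem_univ j)
    _ ≤ ∑ i : Fin n, ∑ j : Fin n, ∫ x : E, ‖(D i j) x‖ ^ 2 :=
        Finset.single_le_sum (fun k _ => Finset.sum_nonneg fun l _ => hnn k l)
          (Finset.mem_univ i)
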